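/- Let A ⊂ E be an admissible acceptance set and assume X_i = E for every i ∈ {1,…,d}. If S(X) = Σ_{i=1}^d X_i for every X ∈ X (and S is an admissible impact map), then α = σ_{S^{-1}(A)}. -/

import Mathlib

open MeasureTheory Filter Set
open scoped ENNReal

noncomputable section

namespace SystemicRisk

variable {Ω : Type*} [MeasurableSpace Ω]

/-- A random variable is essentially bounded. -/
def EssBdd {μ : Measure Ω} (f : Ω →ₘ[μ] ℝ) : Prop :=
  ∃ C : ℝ, ∀ᵐ ω ∂μ, |f ω| ≤ C

/-- The scalar pairing `E[U W]`. -/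
def ip {μ : Measure Ω} (U W : Ω →ₘ[μ] ℝ) : ℝ := ∫ ω, U ω * W ω ∂μ

/-- The Köthe dual of a set of random variables. -/
def kdual {μ : Measure Ω} (L : Set (Ω →ₘ[μ] ℝ)) : Set (Ω →ₘ[μ] ℝ) :=
  {Z | ∀ f ∈ L, Integrable (fun ω => f ω * Z ω) μ}

/-- `nrm` is a Banach lattice norm on `L` (w.r.t. the a.s. order). -/
structure IsBLNorm {μ : Measure Ω} (L : Set (Ω →ₘ[μ] ℝ)) (nrm : (Ω →ₘ[μ] ℝ) → ℝ) : Prop where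
  nonneg : ∀ f ∈ L, 0 ≤ nrm f
  eq_zero_iff : ∀ f ∈ L, (nrm f = 0 ↔ f = 0)
  smul_eq : ∀ f ∈ L, ∀ c : ℝ, nrm (c • f) = |c| * nrm f
  triangle : ∀ f ∈ L, ∀ g ∈ L, nrm (f + g) ≤ nrm f + nrm g
  solid : ∀ f ∈ L, ∀ g ∈ L, |f| ≤ |g| → nrm f ≤ nrm g
  complete : ∀ u : ℕ → (Ω →ₘ[μ] ℝ), (∀ n, u n ∈ L) →
      (∀ ε : ℝ, 0 < ε → ∃ N : ℕ, ∀ m ≥ N, ∀ n ≥ N, nrm (u m - u n) < ε) →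
      ∃ f ∈ L, ∀ ε : ℝ, 0 < ε → ∃ N : ℕ, ∀ n ≥ N, nrm (u n - f) < ε

/-- `L` is an admissible space: a linear subspace of `L^0` which is a Banach lattice
(for the a.s. order, with norm `nrm`) satisfying `L^∞ ⊆ L ⊆ L^1`. -/
structure IsAdmissible {μ : Measure Ω} (L : Set (Ω →ₘ[μ] ℝ)) (nrm : (Ω →ₘ[μ] ℝ) → ℝ) : Prop where
  zero_mem : (0 : Ω →ₘ[μ] ℝ) ∈ L
  add_mem : ∀ f ∈ L, ∀ g ∈ L, f + g ∈ L
  smul_mem : ∀ (c : ℝ), ∀ f ∈ L, c • f ∈ L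
  sup_mem : ∀ f ∈ L, ∀ g ∈ L, f ⊔ g ∈ L
  inf_mem : ∀ f ∈ L, ∀ g ∈ L, f ⊓ g ∈ L
  linfty_subset : ∀ f, EssBdd f → f ∈ L
  subset_lone : ∀ f ∈ L, Integrable f μ
  banach : IsBLNorm L nrm

variable {d : ℕ}

/-- The product space `X = X_1 × ⋯ × X_d`. -/
def prodSet {μ : Measure Ω} (Li : Fin d → Set (Ω →ₘ[μ] ℝ)) : Set (Fin d → (Ω →ₘ[μ] ℝ)) :=
  {X | ∀ i, X i ∈ Li i}

/-- The vector pairing `E[⟨X,Z⟩] = ∑ i, E[X_i Z_i]`. -/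
def pairing {μ : Measure Ω} (X Z : Fin d → (Ω →ₘ[μ] ℝ)) : ℝ := ∑ i, ip (X i) (Z i)

/-- The constant random vector associated with `m ∈ ℝ^d`. -/
def cvec (μ : Measure Ω) (m : Fin d → ℝ) : Fin d → (Ω →ₘ[μ] ℝ) :=
  fun i => (AEEqFun.const Ω (m i) : Ω →ₘ[μ] ℝ)

/-- The weak topology `σ(P, D)` on a set of random vectors `P` induced by the pairing
with elements of `D`. -/
def wtop {μ : Measure Ω} (P D : Set (Fin d → (Ω →ₘ[μ] ℝ))) : TopologicalSpace ↥P :=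
  TopologicalSpace.induced
    (fun X : ↥P => fun Z : ↥D => pairing (X : Fin d → (Ω →ₘ[μ] ℝ)) (Z : Fin d → (Ω →ₘ[μ] ℝ)))
    Pi.topologicalSpace

/-- The weak topology `σ(P, D)` on a set of random variables `P` induced by the pairing
with elements of `D`. -/
def wtop1 {μ : Measure Ω} (P D : Set (Ω →ₘ[μ] ℝ)) : TopologicalSpace ↥P :=
  TopologicalSpace.induced
    (fun U : ↥P => fun W : ↥D => ip (U : Ω →ₘ[μ] ℝ) (W : Ω →ₘ[μ] ℝ))
    Pi.topologicalSpace

/-- An admissible impact map `S : X → E`. -/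
structure IsAdmissibleImpact {μ : Measure Ω} (XX XX' : Set (Fin d → (Ω →ₘ[μ] ℝ)))
    (EE EE' : Set (Ω →ₘ[μ] ℝ)) (S : (Fin d → (Ω →ₘ[μ] ℝ)) → (Ω →ₘ[μ] ℝ)) : Prop where
  mapsTo : ∀ X ∈ XX, S X ∈ EE
  nonconst : ∃ X ∈ XX, ∃ Y ∈ XX, S X ≠ S Y
  normalized : S 0 = 0
  mono : ∀ X ∈ XX, ∀ Y ∈ XX, X ≤ Y → S X ≤ S Y
  concave : ∀ X ∈ XX, ∀ Y ∈ XX, ∀ t : ℝ, 0 ≤ t → t ≤ 1 →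
      t • S X + (1 - t) • S Y ≤ S (t • X + (1 - t) • Y)
  usc : ∀ W ∈ EE', (0 : Ω →ₘ[μ] ℝ) ≤ W →
      @UpperSemicontinuous (↥XX) ℝ (wtop XX XX') _
        (fun X : ↥XX => ∫ ω, S (X : Fin d → (Ω →ₘ[μ] ℝ)) ω * W ω ∂μ)

/-- An admissible acceptance set `A ⊆ E` (relative to the impact map `S`). -/
structure IsAdmissibleAcceptance {μ : Measure Ω} (XX : Set (Fin d → (Ω →ₘ[μ] ℝ)))
    (EE EE' : Set (Ω →ₘ[μ] ℝ)) (S : (Fin d → (Ω →ₘ[μ] ℝ)) → (Ω →ₘ[μ] ℝ))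
    (A : Set (Ω →ₘ[μ] ℝ)) : Prop where
  subset : A ⊆ EE
  preimage_nonempty : ∃ X ∈ XX, S X ∈ A
  preimage_proper : ∃ X ∈ XX, S X ∉ A
  zero_mem : (0 : Ω →ₘ[μ] ℝ) ∈ A
  mono : ∀ U ∈ A, ∀ V ∈ EE, (0 : Ω →ₘ[μ] ℝ) ≤ V → U + V ∈ A
  convex : ∀ U ∈ A, ∀ V ∈ A, ∀ t : ℝ, 0 ≤ t → t ≤ 1 → t • U + (1 - t) • V ∈ A
  closed : @IsClosed (↥EE) (wtop1 EE EE') {U : ↥EE | (U : Ω →ₘ[μ] ℝ) ∈ A}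

/-- The systemic acceptance set `S⁻¹(A) = {X ∈ X : S(X) ∈ A}`. -/
def sysAcc {μ : Measure Ω} (XX : Set (Fin d → (Ω →ₘ[μ] ℝ)))
    (S : (Fin d → (Ω →ₘ[μ] ℝ)) → (Ω →ₘ[μ] ℝ)) (A : Set (Ω →ₘ[μ] ℝ)) :
    Set (Fin d → (Ω →ₘ[μ] ℝ)) :=
  {X ∈ XX | S X ∈ A}

/-- The "first allocate, then aggregate" systemic risk measure `ρ`. -/
def rho (μ : Measure Ω) (S : (Fin d → (Ω →ₘ[μ] ℝ)) → (Ω →ₘ[μ] ℝ)) (A : Set (Ω →ₘ[μ] ℝ))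
    (X : Fin d → (Ω →ₘ[μ] ℝ)) : EReal :=
  ⨅ m ∈ {m : Fin d → ℝ | S (X + cvec μ m) ∈ A}, ((∑ i, m i : ℝ) : EReal)

/-- The (lower) support function of a set of random vectors. -/
def suppV {μ : Measure Ω} (B : Set (Fin d → (Ω →ₘ[μ] ℝ))) (Z : Fin d → (Ω →ₘ[μ] ℝ)) : EReal :=
  ⨅ X ∈ B, ((pairing X Z : ℝ) : EReal)

/-- The barrier cone of a set of random vectors, inside the dual set `D`. -/
def barrV {μ : Measure Ω} (B D : Set (Fin d → (Ω →ₘ[μ] ℝ))) : Set (Fin d → (Ω →ₘ[μ] ℝ)) :=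
  {Z ∈ D | ⊥ < suppV B Z}

/-- The (lower) support function of a set of random variables. -/
def suppS {μ : Measure Ω} (A : Set (Ω →ₘ[μ] ℝ)) (W : Ω →ₘ[μ] ℝ) : EReal :=
  ⨅ U ∈ A, ((ip U W : ℝ) : EReal)

/-- The barrier cone of a set of random variables, inside the dual set `D`. -/
def barrS {μ : Measure Ω} (A D : Set (Ω →ₘ[μ] ℝ)) : Set (Ω →ₘ[μ] ℝ) :=
  {W ∈ D | ⊥ < suppS A W}

/-- The generic penalty function with dual variables `W` ranging over `K`. -/
def penalty {μ : Measure Ω} (XX : Set (Fin d → (Ω →ₘ[μ] ℝ)))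
    (A : Set (Ω →ₘ[μ] ℝ)) (S : (Fin d → (Ω →ₘ[μ] ℝ)) → (Ω →ₘ[μ] ℝ))
    (K : Set (Ω →ₘ[μ] ℝ)) (Z : Fin d → (Ω →ₘ[μ] ℝ)) : EReal :=
  ⨆ W ∈ K, (suppS A W +
    ⨅ X ∈ XX, ((pairing X Z - ∫ ω, S X ω * W ω ∂μ : ℝ) : EReal))

/-- a.s. strictly positive random variables. -/
def strictPos (μ : Measure Ω) : Set (Ω →ₘ[μ] ℝ) := {W | ∀ᵐ ω ∂μ, 0 < W ω}

/-- The penalty function `α`. -/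
def alpha {μ : Measure Ω} (XX : Set (Fin d → (Ω →ₘ[μ] ℝ))) (EE' : Set (Ω →ₘ[μ] ℝ))
    (A : Set (Ω →ₘ[μ] ℝ)) (S : (Fin d → (Ω →ₘ[μ] ℝ)) → (Ω →ₘ[μ] ℝ)) :
    (Fin d → (Ω →ₘ[μ] ℝ)) → EReal :=
  penalty XX A S (barrS A EE')

/-- The penalty function `α⁺`. -/
def alphaPlus {μ : Measure Ω} (XX : Set (Fin d → (Ω →ₘ[μ] ℝ))) (EE' : Set (Ω →ₘ[μ] ℝ))
    (A : Set (Ω →ₘ[μ] ℝ)) (S : (Fin d → (Ω →ₘ[μ] ℝ)) → (Ω →ₘ[μ] ℝ)) :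
    (Fin d → (Ω →ₘ[μ] ℝ)) → EReal :=
  penalty XX A S (barrS A EE' ∩ (strictPos μ ∪ {0}))

/-- a.s. strictly positive random vectors. -/
def strictPosV (μ : Measure Ω) (d : ℕ) : Set (Fin d → (Ω →ₘ[μ] ℝ)) :=
  {Z | ∀ i, ∀ᵐ ω ∂μ, 0 < Z i ω}

/-- The set `C` of nonnegative dual vectors with all components of expectation one. -/
def Cset {μ : Measure Ω} (XX' : Set (Fin d → (Ω →ₘ[μ] ℝ))) : Set (Fin d → (Ω →ₘ[μ] ℝ)) :=
  {Z ∈ XX' | (∀ i, (0 : Ω →ₘ[μ] ℝ) ≤ Z i) ∧ ∀ i, (∫ ω, Z i ω ∂μ) = 1}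

/-- A map with values in `[−∞,∞]` is proper on `P` if it never attains `−∞` on `P`
and is finite somewhere on `P`. -/
def ProperOn {β : Type*} (P : Set β) (f : β → EReal) : Prop :=
  (∀ x ∈ P, f x ≠ ⊥) ∧ ∃ x ∈ P, f x ≠ ⊤

/-- The positive part of an extended real number, as an extended nonnegative real. -/
def epos (x : EReal) : ℝ≥0∞ := if x = ⊤ then ⊤ else ENNReal.ofReal x.toReal

/-- The integral of an extended-real-valued function. -/
def eintegral (μ : Measure Ω) (g : Ω → EReal) : EReal :=
  ((∫⁻ ω, epos (g ω) ∂μ : ℝ≥0∞) : EReal) - ((∫⁻ ω, epos (-(g ω)) ∂μ : ℝ≥0∞) : EReal)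



section AuxLemmas

variable {Ω : Type*} [MeasurableSpace Ω] {μ : Measure Ω}

lemma ereal_eq_bot (x : EReal) (h : ∀ r : ℝ, x ≤ (r : EReal)) : x = ⊥ := by
  induction x using EReal.rec with
  | bot => rfl
  | coe a => exfalso; have := EReal.coe_le_coe_iff.mp (h (a - 1)); linarith
  | top => simpa using h 0

lemma mul_div_neg_le (c r : ℝ) (hc : c < 0) : (|r| / (-c)) * c ≤ r := by
  have h1 : (|r| / (-c)) * c = -|r| := by
    rw [div_mul_eq_mul_div, div_eq_iff (ne_of_gt (neg_pos.mpr hc))]; ring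
  rw [h1]; exact neg_abs_le r

lemma ip_zero_left (W : Ω →ₘ[μ] ℝ) : ip (0 : Ω →ₘ[μ] ℝ) W = 0 := by
  unfold ip
  rw [integral_congr_ae (g := fun _ => (0:ℝ))]
  · simp
  · filter_upwards [MeasureTheory.AEEqFun.coeFn_zero (β := ℝ) (μ := μ)] with ω h
    simp [h]

lemma ip_smul (c : ℝ) (f W : Ω →ₘ[μ] ℝ) : ip (c • f) W = c * ip f W := by
  unfold ip
  rw [← integral_const_mul]
  refine integral_congr_ae ?_
  filter_upwards [MeasureTheory.AEEqFun.coeFn_smul c f] with ω h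
  simp [h]; ring

lemma ip_add {f g W : Ω →ₘ[μ] ℝ} (hf : Integrable (fun ω => f ω * W ω) μ)
    (hg : Integrable (fun ω => g ω * W ω) μ) : ip (f + g) W = ip f W + ip g W := by
  unfold ip
  rw [← integral_add hf hg]
  refine integral_congr_ae ?_
  filter_upwards [MeasureTheory.AEEqFun.coeFn_add f g] with ω h
  simp [h]; ring

lemma ip_neg (f W : Ω →ₘ[μ] ℝ) : ip (-f) W = - ip f W := by
  have := ip_smul (-1) f W
  simpa using this

lemma ip_sum_mem {EE : Set (Ω →ₘ[μ] ℝ)} (hz : (0:Ω→ₘ[μ]ℝ) ∈ EE)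
    (hadd : ∀ f ∈ EE, ∀ g ∈ EE, f + g ∈ EE)
    {W : Ω →ₘ[μ] ℝ} (hW : W ∈ kdual EE) {d : ℕ} (X : Fin d → (Ω →ₘ[μ] ℝ))
    (hX : ∀ i, X i ∈ EE) (s : Finset (Fin d)) :
    (∑ i ∈ s, X i) ∈ EE ∧ ip (∑ i ∈ s, X i) W = ∑ i ∈ s, ip (X i) W := by
  classical
  induction s using Finset.induction with
  | empty => simpa using ⟨hz, ip_zero_left W⟩
  | insert _ _ hns ih =>
      rw [Finset.sum_insert hns, Finset.sum_insert hns]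
      exact ⟨hadd _ (hX _) _ ih.1, by rw [ip_add (hW _ (hX _)) (hW _ ih.1), ih.2]⟩

lemma exists_bdd_pos_ip [IsProbabilityMeasure μ] (s : Ω →ₘ[μ] ℝ) (hs : s ≠ 0)
    (hint : Integrable (fun ω => s ω) μ) :
    ∃ V : Ω →ₘ[μ] ℝ, EssBdd V ∧ 0 < ∫ ω, V ω * s ω ∂μ := by
  classical
  have hf : AEStronglyMeasurable (fun ω => s ω) μ := s.aestronglyMeasurable
  set g := hf.mk _ with hgdef
  have hgm : StronglyMeasurable g := hf.stronglyMeasurable_mk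
  have hfg : (fun ω => s ω) =ᵐ[μ] g := hf.ae_eq_mk
  set vf : Ω → ℝ := fun ω => if 0 < g ω then 1 else if g ω < 0 then -1 else 0 with hvf
  have hvm : Measurable vf :=
    Measurable.ite (measurableSet_lt measurable_const hgm.measurable) measurable_const
      (Measurable.ite (measurableSet_lt hgm.measurable measurable_const) measurable_const
        measurable_const)
  refine ⟨MeasureTheory.AEEqFun.mk vf hvm.aestronglyMeasurable, ⟨1, ?_⟩, ?_⟩
  · filter_upwards [MeasureTheory.AEEqFun.coeFn_mk vf hvm.aestronglyMeasurable] with ω h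
    rw [h, hvf]
    dsimp only
    split_ifs <;> norm_num
  · have hcongr :
        (fun ω => (MeasureTheory.AEEqFun.mk vf hvm.aestronglyMeasurable : Ω →ₘ[μ] ℝ) ω * s ω)
          =ᵐ[μ] fun ω => |g ω| := by
      filter_upwards [MeasureTheory.AEEqFun.coeFn_mk vf hvm.aestronglyMeasurable, hfg] with ω h1 h2
      rw [h1, h2, hvf]
      dsimp only
      rcases lt_trichotomy (g ω) 0 with h | h | h
      · rw [if_neg (by linarith), if_pos h, abs_of_neg h]; ring
      · simp [h]
      · rw [if_pos h, abs_of_pos h]; ring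
    rw [integral_congr_ae hcongr]
    have hgint : Integrable g μ := hint.congr hfg
    have hne : ¬ (g =ᵐ[μ] 0) := by
      intro h
      exact hs (MeasureTheory.AEEqFun.ext ((hfg.trans h).trans
        (MeasureTheory.AEEqFun.coeFn_zero (β := ℝ) (μ := μ)).symm))
    have habs : ∫ ω, |g ω| ∂μ ≠ 0 := by
      intro h0
      apply hne
      have h1 := (integral_eq_zero_iff_of_nonneg (fun ω => abs_nonneg (g ω)) hgint.abs).mp h0
      filter_upwards [h1] with ω hω
      simpa using abs_eq_zero.mp hω
    exact lt_of_le_of_ne (integral_nonneg fun ω => abs_nonneg _) (Ne.symm habs)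

end AuxLemmas

/-- for the consolidated-balance-sheet aggregation `S(X) = ∑ᵢ Xᵢ` one has
`α = σ_{S⁻¹(A)}`. -/
theorem statement12 {μ : Measure Ω} [IsProbabilityMeasure μ] {d : ℕ}
    (Li : Fin d → Set (Ω →ₘ[μ] ℝ)) (nrmX : Fin d → ((Ω →ₘ[μ] ℝ) → ℝ))
    (EE : Set (Ω →ₘ[μ] ℝ)) (nrmE : (Ω →ₘ[μ] ℝ) → ℝ)
    (S : (Fin d → (Ω →ₘ[μ] ℝ)) → (Ω →ₘ[μ] ℝ)) (A : Set (Ω →ₘ[μ] ℝ))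
    (hLi : ∀ i, IsAdmissible (Li i) (nrmX i))
    (hE : IsAdmissible EE nrmE)
    (hS : IsAdmissibleImpact (prodSet Li) (prodSet fun i => kdual (Li i)) EE (kdual EE) S)
    (hA : IsAdmissibleAcceptance (prodSet Li) EE (kdual EE) S A)
    (hXiE : ∀ i, Li i = EE)
    (hSsum : ∀ X ∈ prodSet Li, S X = ∑ i, X i) :
    ∀ Z ∈ prodSet fun i => kdual (Li i),
      alpha (prodSet Li) (kdual EE) A S Z = suppV (sysAcc (prodSet Li) S A) Z := by
  classical
  intro Z hZ
  have hd : 0 < d := by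
    rcases Nat.eq_zero_or_pos d with h0 | h
    · exfalso
      rcases hS.nonconst with ⟨X, -, Y, -, hne⟩
      subst h0
      exact hne (congrArg S (funext fun i => i.elim0))
    · exact h
  set i0 : Fin d := ⟨0, hd⟩ with hi0def
  have hZk : ∀ i, Z i ∈ kdual EE := fun i => by have h := hZ i; simp only [hXiE] at h; exact h
  have hmemE : ∀ X ∈ prodSet Li, ∀ i, X i ∈ EE := fun X hX i => by
    have h := hX i; rwa [hXiE i] at h
  have h0X : (0 : Fin d → (Ω →ₘ[μ] ℝ)) ∈ prodSet Li := fun i => by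
    rw [hXiE i]; exact hE.zero_mem
  have honeE : (MeasureTheory.AEEqFun.const Ω (1:ℝ) : Ω →ₘ[μ] ℝ) ∈ EE :=
    hE.linfty_subset _ ⟨1, by
      filter_upwards [MeasureTheory.AEEqFun.coeFn_const Ω (1:ℝ)] with ω h
      rw [h]; norm_num⟩
  have hkint : ∀ W ∈ kdual EE, Integrable (fun ω => W ω) μ := fun W hW => by
    refine (hW _ honeE).congr ?_
    filter_upwards [MeasureTheory.AEEqFun.coeFn_const Ω (1:ℝ)] with ω hω
    rw [hω]; simp
  -- single vectors
  set sing : (Ω →ₘ[μ] ℝ) → Fin d → (Fin d → (Ω →ₘ[μ] ℝ)) :=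
    fun V j k => if k = j then V else 0 with hsingdef
  have hsing_mem : ∀ V ∈ EE, ∀ j, sing V j ∈ prodSet Li := by
    intro V hV j k
    rw [hXiE k]
    dsimp [sing]
    split
    · exact hV
    · exact hE.zero_mem
  have hS_sing : ∀ V ∈ EE, ∀ j, S (sing V j) = V := by
    intro V hV j
    rw [hSsum _ (hsing_mem V hV j)]
    simp [sing, Finset.sum_ite_eq']
  have hpair_sing : ∀ (V : Ω →ₘ[μ] ℝ) (j : Fin d) (Y : Fin d → (Ω →ₘ[μ] ℝ)),
      pairing (sing V j) Y = ip V (Y j) := by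
    intro V j Y
    unfold pairing
    rw [Finset.sum_eq_single j]
    · simp [sing]
    · intro k _ hk
      simp [sing, hk, ip_zero_left]
    · simp
  have hsmulX : ∀ (t : ℝ), ∀ X ∈ prodSet Li, t • X ∈ prodSet Li := by
    intro t X hX i
    rw [hXiE i]
    exact hE.smul_mem t _ (hmemE X hX i)
  have haddX : ∀ X ∈ prodSet Li, ∀ Y ∈ prodSet Li, X + Y ∈ prodSet Li := by
    intro X hX Y hY i
    rw [hXiE i]
    exact hE.add_mem _ (hmemE X hX i) _ (hmemE Y hY i)
  have hpair_smul : ∀ (t : ℝ) (X Y : Fin d → (Ω →ₘ[μ] ℝ)),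
      pairing (t • X) Y = t * pairing X Y := by
    intro t X Y
    unfold pairing
    rw [Finset.mul_sum]
    exact Finset.sum_congr rfl fun k _ => ip_smul t (X k) (Y k)
  have hpair_add : ∀ X ∈ prodSet Li, ∀ Y ∈ prodSet Li,
      pairing (X + Y) Z = pairing X Z + pairing Y Z := by
    intro X hX Y hY
    unfold pairing
    rw [← Finset.sum_add_distrib]
    exact Finset.sum_congr rfl fun k _ =>
      ip_add (hZk k _ (hmemE X hX k)) (hZk k _ (hmemE Y hY k))
  have hS_smul : ∀ (t : ℝ), ∀ X ∈ prodSet Li, S (t • X) = t • S X := by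
    intro t X hX
    rw [hSsum _ (hsmulX t X hX), hSsum _ hX, Finset.smul_sum]
    rfl
  have hipS : ∀ X ∈ prodSet Li, ∀ W ∈ kdual EE,
      (∫ ω, S X ω * W ω ∂μ) = ∑ k, ip (X k) W := by
    intro X hX W hW
    have h := ip_sum_mem hE.zero_mem hE.add_mem hW X (hmemE X hX) Finset.univ
    rw [hSsum _ hX]
    exact h.2
  -- the inner infimum is ⊥ whenever the linear functional is negative somewhere
  have hInn_bot : ∀ (W : Ω →ₘ[μ] ℝ), ∀ X₀ ∈ prodSet Li,
      pairing X₀ Z - (∫ ω, S X₀ ω * W ω ∂μ) < 0 →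
      (⨅ X ∈ prodSet Li, ((pairing X Z - ∫ ω, S X ω * W ω ∂μ : ℝ) : EReal)) = ⊥ := by
    intro W X₀ hX₀ hL
    apply ereal_eq_bot
    intro r
    set c : ℝ := pairing X₀ Z - (∫ ω, S X₀ ω * W ω ∂μ) with hc
    set t : ℝ := |r| / (-c) with ht
    have hval : pairing (t • X₀) Z - (∫ ω, S (t • X₀) ω * W ω ∂μ) = t * c := by
      rw [hpair_smul, hS_smul t X₀ hX₀]
      have h2 : (∫ ω, (t • S X₀) ω * W ω ∂μ) = t * ∫ ω, S X₀ ω * W ω ∂μ := ip_smul t (S X₀) W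
      rw [h2, hc]; ring
    calc (⨅ X ∈ prodSet Li, ((pairing X Z - ∫ ω, S X ω * W ω ∂μ : ℝ) : EReal))
        ≤ ((pairing (t • X₀) Z - ∫ ω, S (t • X₀) ω * W ω ∂μ : ℝ) : EReal) :=
          iInf₂_le _ (hsmulX t X₀ hX₀)
      _ ≤ (r : EReal) := by
          rw [hval]
          exact EReal.coe_le_coe_iff.mpr (mul_div_neg_le c r hL)
  by_cases hall : ∀ k, Z k = Z i0
  · -- all coordinates of Z agree with W₀ := Z i0
    have hLzero : ∀ X ∈ prodSet Li, pairing X Z - (∫ ω, S X ω * (Z i0) ω ∂μ) = 0 := by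
      intro X hX
      rw [hipS X hX _ (hZk i0), sub_eq_zero]
      unfold pairing
      exact Finset.sum_congr rfl fun k _ => by rw [hall k]
    have hInnW₀ : (⨅ X ∈ prodSet Li,
        ((pairing X Z - ∫ ω, S X ω * (Z i0) ω ∂μ : ℝ) : EReal)) = 0 := by
      apply le_antisymm
      · refine le_trans (iInf₂_le 0 h0X) ?_
        rw [hLzero 0 h0X]
        exact le_of_eq EReal.coe_zero
      · refine le_iInf₂ fun X hX => ?_
        rw [hLzero X hX]
        exact le_of_eq EReal.coe_zero.symm
    -- the X₀ construction for W ≠ Z i0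
    have hX₀W : ∀ W ∈ kdual EE, W ≠ Z i0 → ∃ X₀ ∈ prodSet Li,
        pairing X₀ Z - (∫ ω, S X₀ ω * W ω ∂μ) < 0 := by
      intro W hW hne
      obtain ⟨V, hVb, hVpos⟩ := exists_bdd_pos_ip (W - Z i0) (sub_ne_zero.mpr hne)
        (((hkint W hW).sub (hkint _ (hZk i0))).congr
          (MeasureTheory.AEEqFun.coeFn_sub W (Z i0)).symm)
      have hVE : V ∈ EE := hE.linfty_subset V hVb
      refine ⟨sing V i0, hsing_mem V hVE i0, ?_⟩
      rw [hpair_sing, hS_sing V hVE i0]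
      have h1 : (∫ ω, V ω * (W - Z i0) ω ∂μ)
          = (∫ ω, V ω * W ω ∂μ) - ∫ ω, V ω * (Z i0) ω ∂μ := by
        rw [← integral_sub (hW V hVE) (hZk i0 V hVE)]
        refine integral_congr_ae ?_
        filter_upwards [MeasureTheory.AEEqFun.coeFn_sub W (Z i0)] with ω h
        rw [h]; simp; ring
      rw [h1] at hVpos
      show ip V (Z i0) - _ < 0
      unfold ip
      linarith
    have hsVle : suppV (sysAcc (prodSet Li) S A) Z ≤ suppS A (Z i0) := by
      refine le_iInf₂ fun U hU => ?_
      have hUE : U ∈ EE := hA.subset hU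
      have hmem : sing U i0 ∈ sysAcc (prodSet Li) S A :=
        ⟨hsing_mem U hUE i0, by rw [hS_sing U hUE i0]; exact hU⟩
      refine le_trans (iInf₂_le _ hmem) ?_
      rw [hpair_sing]
    have hsVge : suppS A (Z i0) ≤ suppV (sysAcc (prodSet Li) S A) Z := by
      refine le_iInf₂ fun X hX => ?_
      obtain ⟨hXX, hSA⟩ := hX
      refine le_trans (iInf₂_le (S X) hSA) ?_
      have h1 : ip (S X) (Z i0) = pairing X Z := by
        rw [show ip (S X) (Z i0) = ∫ ω, S X ω * (Z i0) ω ∂μ from rfl, hipS X hXX _ (hZk i0)]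
        unfold pairing
        exact Finset.sum_congr rfl fun k _ => by rw [hall k]
      rw [h1]
    have hsVeq : suppV (sysAcc (prodSet Li) S A) Z = suppS A (Z i0) :=
      le_antisymm hsVle hsVge
    rcases eq_or_ne (suppS A (Z i0)) ⊥ with hbar | hbar
    · -- case B : Z i0 is not in the barrier cone
      have hαbot : alpha (prodSet Li) (kdual EE) A S Z = ⊥ := by
        apply le_bot_iff.mp
        unfold alpha penalty
        refine iSup₂_le fun W hW => ?_
        have hWne : W ≠ Z i0 := by
          intro h
          have h2 := hW.2
          rw [h, hbar] at h2
          exact lt_irrefl ⊥ h2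
        obtain ⟨X₀, hX₀, hL⟩ := hX₀W W hW.1 hWne
        rw [hInn_bot W X₀ hX₀ hL, EReal.add_bot]
      rw [hαbot, hsVeq, hbar]
    · -- case C : Z i0 lies in the barrier cone
      have hW₀mem : Z i0 ∈ barrS A (kdual EE) := ⟨hZk i0, bot_lt_iff_ne_bot.mpr hbar⟩
      have hαeq : alpha (prodSet Li) (kdual EE) A S Z = suppS A (Z i0) := by
        unfold alpha penalty
        apply le_antisymm
        · refine iSup₂_le fun W hW => ?_
          by_cases hWeq : W = Z i0
          · subst hWeq
            rw [hInnW₀, add_zero]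
          · obtain ⟨X₀, hX₀, hL⟩ := hX₀W W hW.1 hWeq
            rw [hInn_bot W X₀ hX₀ hL, EReal.add_bot]
            exact bot_le
        · refine le_trans ?_ (le_iSup₂ (Z i0) hW₀mem)
          rw [hInnW₀, add_zero]
      rw [hαeq, hsVeq]
  · -- case A : the coordinates of Z do not all agree
    push_neg at hall
    obtain ⟨j, hj⟩ := hall
    obtain ⟨V, hVb, hVpos⟩ := exists_bdd_pos_ip (Z i0 - Z j) (sub_ne_zero.mpr (Ne.symm hj))
      (((hkint _ (hZk i0)).sub (hkint _ (hZk j))).congr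
        (MeasureTheory.AEEqFun.coeFn_sub (Z i0) (Z j)).symm)
    have hVE : V ∈ EE := hE.linfty_subset V hVb
    have hnegVE : -V ∈ EE := by
      have h := hE.smul_mem (-1) V hVE
      rwa [neg_one_smul] at h
    have hX₀X : sing V j + sing (-V) i0 ∈ prodSet Li :=
      haddX _ (hsing_mem V hVE j) _ (hsing_mem _ hnegVE i0)
    have hSX₀ : S (sing V j + sing (-V) i0) = 0 := by
      rw [hSsum _ hX₀X]
      have h1 : ∀ k : Fin d, (sing V j + sing (-V) i0) k = sing V j k + sing (-V) i0 k :=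
        fun k => rfl
      calc (∑ k, (sing V j + sing (-V) i0) k)
          = (∑ k, sing V j k) + ∑ k, sing (-V) i0 k := Finset.sum_add_distrib
        _ = V + (-V) := by simp [sing, Finset.sum_ite_eq']
        _ = 0 := add_neg_cancel V
    have hpairX₀ : pairing (sing V j + sing (-V) i0) Z < 0 := by
      rw [hpair_add _ (hsing_mem V hVE j) _ (hsing_mem _ hnegVE i0), hpair_sing, hpair_sing,
        ip_neg]
      have h1 : (∫ ω, V ω * (Z i0 - Z j) ω ∂μ) = ip V (Z i0) - ip V (Z j) := by
        rw [show ip V (Z i0) = ∫ ω, V ω * (Z i0) ω ∂μ from rfl,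
          show ip V (Z j) = ∫ ω, V ω * (Z j) ω ∂μ from rfl,
          ← integral_sub (hZk i0 V hVE) (hZk j V hVE)]
        refine integral_congr_ae ?_
        filter_upwards [MeasureTheory.AEEqFun.coeFn_sub (Z i0) (Z j)] with ω h
        rw [h]; simp; ring
      rw [h1] at hVpos
      linarith
    have hLX₀ : ∀ W : Ω →ₘ[μ] ℝ,
        pairing (sing V j + sing (-V) i0) Z - (∫ ω, S (sing V j + sing (-V) i0) ω * W ω ∂μ) < 0 := by
      intro W
      have h0 : (∫ ω, S (sing V j + sing (-V) i0) ω * W ω ∂μ) = 0 := by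
        rw [hSX₀]; exact ip_zero_left W
      rw [h0, sub_zero]; exact hpairX₀
    have hαbot : alpha (prodSet Li) (kdual EE) A S Z = ⊥ := by
      apply le_bot_iff.mp
      unfold alpha penalty
      refine iSup₂_le fun W hW => ?_
      rw [hInn_bot W _ hX₀X (hLX₀ W), EReal.add_bot]
    have hsVbot : suppV (sysAcc (prodSet Li) S A) Z = ⊥ := by
      apply ereal_eq_bot
      intro r
      set c : ℝ := pairing (sing V j + sing (-V) i0) Z with hc
      set t : ℝ := |r| / (-c) with ht
      have hmem : t • (sing V j + sing (-V) i0) ∈ sysAcc (prodSet Li) S A := by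
        refine ⟨hsmulX t _ hX₀X, ?_⟩
        rw [hS_smul t _ hX₀X, hSX₀, smul_zero]
        exact hA.zero_mem
      calc suppV (sysAcc (prodSet Li) S A) Z
          ≤ ((pairing (t • (sing V j + sing (-V) i0)) Z : ℝ) : EReal) := iInf₂_le _ hmem
        _ ≤ (r : EReal) := by
            rw [hpair_smul]
            exact EReal.coe_le_coe_iff.mpr (mul_div_neg_le c r hpairX₀)
    rw [hαbot, hsVbot]


end SystemicRisk
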